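/- Under the p-random measure (each site of a rectangle R with dimensions (a,b), a ≤ b and a·p ≤ δ for sufficiently small δ, included in A independently with probability p), the probability that R is internally filled in two-neighbour bootstrap percolation is at most 3^{φ(R)} · exp(−φ(R)·g(a·q)), where q = −log(1−p), φ(R) = a + b, and g(z) = −log(β(1−e^{−z})) with β(u) = (u+√(u(4−3u)))/2. -/

import Mathlib

/-- Two sites of `ℤ²` are adjacent if they are at `ℓ¹`-distance one. -/
def adjZ2 (v w : ℤ × ℤ) : Prop := (v.1 - w.1).natAbs + (v.2 - w.2).natAbs = 1

/-- The closure of initial set `A` under the two-neighbour bootstrap process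
restricted to the region `R`. -/
def bClosure (R A : Set (ℤ × ℤ)) : Set (ℤ × ℤ) :=
  ⋂₀ {B : Set (ℤ × ℤ) | A ∩ R ⊆ B ∧
      ∀ v ∈ R, (∃ w₁ ∈ B, ∃ w₂ ∈ B, w₁ ≠ w₂ ∧ adjZ2 v w₁ ∧ adjZ2 v w₂) → v ∈ B}

noncomputable def betaFn (u : ℝ) : ℝ := (u + Real.sqrt (u * (4 - 3 * u))) / 2

noncomputable def gFn (z : ℝ) : ℝ := - Real.log (betaFn (1 - Real.exp (-z)))

open scoped Classical in
/-- The probability of the event `E` under the `p`-random (product Bernoulli)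
measure on subsets of the finite set `V`. -/
noncomputable def probEvent {ι : Type*} [DecidableEq ι] (V : Finset ι) (p : ℝ)
    (E : Finset ι → Prop) : ℝ :=
  ∑ A ∈ V.powerset, if E A then p ^ A.card * (1 - p) ^ (V.card - A.card) else 0

/-- The rectangle `[1,a] × [1,b]` as a finite set of sites. -/
noncomputable def rectFin (a b : ℕ) : Finset (ℤ × ℤ) := Finset.Icc 1 (a : ℤ) ×ˢ Finset.Icc 1 (b : ℤ)

/-- The rectangle `[1,a] × [1,b]` as a set of sites. -/
def rectSet (a b : ℕ) : Set (ℤ × ℤ) := Set.Icc 1 (a : ℤ) ×ˢ Set.Icc 1 (b : ℤ)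

/-! ### Auxiliary material -/

section Aux

open Finset

instance adjZ2.dec : ∀ v w : ℤ × ℤ, Decidable (adjZ2 v w) := fun v w => by
  unfold adjZ2; infer_instance

lemma adjZ2_comm {v w : ℤ × ℤ} : adjZ2 v w ↔ adjZ2 w v := by
  unfold adjZ2; omega

/-- degree of `v` into `S` -/
def degF (S : Finset (ℤ × ℤ)) (v : ℤ × ℤ) : ℕ := (S.filter (fun w => adjZ2 v w)).card

/-- number of ordered adjacent pairs inside `S` -/
def eCount (S : Finset (ℤ × ℤ)) : ℕ := ∑ v ∈ S, degF S v

/-- the new sites infected in one step inside `R` -/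
def nextF (R S : Finset (ℤ × ℤ)) : Finset (ℤ × ℤ) :=
  R.filter (fun v => v ∉ S ∧ ∃ w₁ ∈ S, ∃ w₂ ∈ S, w₁ ≠ w₂ ∧ adjZ2 v w₁ ∧ adjZ2 v w₂)

def stepF (R S : Finset (ℤ × ℤ)) : Finset (ℤ × ℤ) := S ∪ nextF R S

lemma disjoint_nextF (R S : Finset (ℤ × ℤ)) : Disjoint S (nextF R S) :=
  Finset.disjoint_left.mpr fun v hv hvN => ((Finset.mem_filter.mp hvN).2.1 hv)

lemma cross_symm (S N : Finset (ℤ × ℤ)) :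
    ∑ v ∈ S, degF N v = ∑ v ∈ N, degF S v := by
  unfold degF
  simp only [Finset.card_filter]
  rw [Finset.sum_comm]
  refine Finset.sum_congr rfl fun w _ => Finset.sum_congr rfl fun v _ => ?_
  simp [adjZ2_comm (v := v) (w := w)]

lemma two_le_degF {S : Finset (ℤ × ℤ)} {v : ℤ × ℤ}
    (h : ∃ w₁ ∈ S, ∃ w₂ ∈ S, w₁ ≠ w₂ ∧ adjZ2 v w₁ ∧ adjZ2 v w₂) : 2 ≤ degF S v := by
  obtain ⟨w₁, h₁, w₂, h₂, hne, ha₁, ha₂⟩ := h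
  have hsub : ({w₁, w₂} : Finset (ℤ × ℤ)) ⊆ S.filter (fun w => adjZ2 v w) := by
    intro x hx
    rcases Finset.mem_insert.mp hx with rfl | hx
    · exact Finset.mem_filter.mpr ⟨h₁, ha₁⟩
    · rcases Finset.mem_singleton.mp hx with rfl
      exact Finset.mem_filter.mpr ⟨h₂, ha₂⟩
  calc 2 = ({w₁, w₂} : Finset (ℤ × ℤ)).card := (Finset.card_pair hne).symm
    _ ≤ _ := Finset.card_le_card hsub

lemma eCount_step (R S : Finset (ℤ × ℤ)) :
    eCount S + 4 * (nextF R S).card ≤ eCount (stepF R S) := by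
  set N := nextF R S with hN
  have hd : Disjoint S N := disjoint_nextF R S
  have hdeg : ∀ v, degF (S ∪ N) v = degF S v + degF N v := by
    intro v
    unfold degF
    rw [Finset.filter_union, Finset.card_union_of_disjoint
      (Finset.disjoint_filter_filter hd)]
  have h2 : ∀ v ∈ N, 2 ≤ degF S v := by
    intro v hv
    exact two_le_degF (Finset.mem_filter.mp hv).2.2
  have hsum2 : 2 * N.card ≤ ∑ v ∈ N, degF S v := by
    calc 2 * N.card = ∑ _v ∈ N, 2 := by rw [Finset.sum_const]; ring
      _ ≤ _ := Finset.sum_le_sum h2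
  have hcross : ∑ v ∈ S, degF N v = ∑ v ∈ N, degF S v := cross_symm S N
  have : eCount (stepF R S) = eCount S + ∑ v ∈ S, degF N v
      + (∑ v ∈ N, degF S v + ∑ v ∈ N, degF N v) := by
    unfold eCount stepF
    rw [Finset.sum_union hd]
    simp only [← hN, hdeg, Finset.sum_add_distrib]
  omega

lemma stepF_self (R : Finset (ℤ × ℤ)) : stepF R R = R := by
  unfold stepF nextF
  have : R.filter (fun v => v ∉ R ∧ ∃ w₁ ∈ R, ∃ w₂ ∈ R, w₁ ≠ w₂ ∧ adjZ2 v w₁ ∧ adjZ2 v w₂) = ∅ := by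
    refine Finset.filter_false_of_mem fun v hv => ?_
    intro h; exact h.1 hv
  rw [this, Finset.union_empty]

lemma exists_fixed (R : Finset (ℤ × ℤ)) :
    ∀ n, ∀ S : Finset (ℤ × ℤ), S ⊆ R → R.card ≤ S.card + n →
      ∃ T, S ⊆ T ∧ T ⊆ R ∧ stepF R T = T ∧
        4 * T.card + eCount S ≤ 4 * S.card + eCount T := by
  intro n
  induction n with
  | zero =>
    intro S hS hc
    have : S = R := Finset.eq_of_subset_of_card_le hS (by omega)
    subst this
    exact ⟨S, subset_rfl, subset_rfl, stepF_self S, le_rfl⟩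
  | succ n ih =>
    intro S hS hc
    by_cases hNe : nextF R S = ∅
    · refine ⟨S, subset_rfl, hS, ?_, le_rfl⟩
      unfold stepF; rw [hNe, Finset.union_empty]
    · have hNcard : 1 ≤ (nextF R S).card :=
        Finset.card_pos.mpr (Finset.nonempty_of_ne_empty hNe)
      have hstep_sub : stepF R S ⊆ R :=
        Finset.union_subset hS (Finset.filter_subset _ _)
      have hcardeq : (stepF R S).card = S.card + (nextF R S).card := by
        unfold stepF
        exact Finset.card_union_of_disjoint (disjoint_nextF R S)
      obtain ⟨T, h1, h2, h3, h4⟩ := ih (stepF R S) hstep_sub (by omega)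
      refine ⟨T, Finset.subset_union_left.trans h1, h2, h3, ?_⟩
      have h5 := eCount_step R S
      omega

lemma coe_rectFin (a b : ℕ) : ↑(rectFin a b) = rectSet a b := by
  unfold rectFin rectSet
  rw [Finset.coe_product]
  simp

lemma card_rectFin (a b : ℕ) : (rectFin a b).card = a * b := by
  unfold rectFin
  rw [Finset.card_product, Int.card_Icc, Int.card_Icc]
  simp

lemma adj_cases {v w : ℤ × ℤ} (h : adjZ2 v w) :
    w = (v.1 - 1, v.2) ∨ w = (v.1 + 1, v.2) ∨ w = (v.1, v.2 - 1) ∨ w = (v.1, v.2 + 1) := by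
  obtain ⟨x, y⟩ := w
  obtain ⟨s, t⟩ := v
  unfold adjZ2 at h
  simp only [Prod.mk.injEq] at *
  omega

lemma degF_rect_le (a b : ℕ) {v : ℤ × ℤ} :
    degF (rectFin a b) v ≤
      (((if 2 ≤ v.1 then 1 else 0) + (if v.1 + 1 ≤ (a:ℤ) then 1 else 0)) : ℕ)
      + ((if 2 ≤ v.2 then 1 else 0) + (if v.2 + 1 ≤ (b:ℤ) then 1 else 0)) := by
  classical
  have hmem : ∀ x y : ℤ, ((x, y) ∈ rectFin a b) ↔ (1 ≤ x ∧ x ≤ a ∧ 1 ≤ y ∧ y ≤ b) := by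
    intro x y
    unfold rectFin
    simp [Finset.mem_Icc, and_assoc]
  have hsub : (rectFin a b).filter (fun w => adjZ2 v w) ⊆
      ((if 2 ≤ v.1 then {((v.1 - 1, v.2) : ℤ × ℤ)} else ∅) ∪
       (if v.1 + 1 ≤ (a:ℤ) then {((v.1 + 1, v.2) : ℤ × ℤ)} else ∅)) ∪
      ((if 2 ≤ v.2 then {((v.1, v.2 - 1) : ℤ × ℤ)} else ∅) ∪
       (if v.2 + 1 ≤ (b:ℤ) then {((v.1, v.2 + 1) : ℤ × ℤ)} else ∅)) := by
    intro w hw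
    obtain ⟨hwR, hadj⟩ := Finset.mem_filter.mp hw
    rcases adj_cases hadj with rfl | rfl | rfl | rfl
    · have := (hmem _ _).mp hwR
      have h2 : 2 ≤ v.1 := by omega
      simp [h2]
    · have := (hmem _ _).mp hwR
      have h2 : v.1 + 1 ≤ (a:ℤ) := by omega
      simp [h2]
    · have := (hmem _ _).mp hwR
      have h2 : 2 ≤ v.2 := by omega
      simp [h2]
    · have := (hmem _ _).mp hwR
      have h2 : v.2 + 1 ≤ (b:ℤ) := by omega
      simp [h2]
  have hcard : ∀ (c : Prop) [Decidable c] (x : ℤ × ℤ),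
      ((if c then ({x} : Finset (ℤ × ℤ)) else ∅)).card = (if c then 1 else 0) := by
    intro c _ x
    split <;> simp
  calc degF (rectFin a b) v ≤ _ := Finset.card_le_card hsub
    _ ≤ _ := by
        refine (Finset.card_union_le _ _).trans ?_
        gcongr <;> refine (Finset.card_union_le _ _).trans ?_ <;> rw [hcard, hcard]

lemma sum_indicator_Icc (a : ℕ) (ha : 1 ≤ a) :
    (∑ x ∈ Finset.Icc (1:ℤ) (a:ℤ), ((if 2 ≤ x then 1 else 0) + (if x + 1 ≤ (a:ℤ) then 1 else 0) : ℕ))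
      = (a - 1) + (a - 1) := by
  rw [Finset.sum_add_distrib]
  have h1 : (∑ x ∈ Finset.Icc (1:ℤ) (a:ℤ), ((if 2 ≤ x then 1 else 0) : ℕ)) = a - 1 := by
    rw [Finset.sum_boole]
    have : (Finset.Icc (1:ℤ) (a:ℤ)).filter (fun x => 2 ≤ x) = Finset.Icc (2:ℤ) (a:ℤ) := by
      ext x; simp only [Finset.mem_filter, Finset.mem_Icc]; omega
    rw [this, Int.card_Icc]
    simp only [Nat.cast_id]
    omega
  have h2 : (∑ x ∈ Finset.Icc (1:ℤ) (a:ℤ), ((if x + 1 ≤ (a:ℤ) then 1 else 0) : ℕ)) = a - 1 := by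
    rw [Finset.sum_boole]
    have : (Finset.Icc (1:ℤ) (a:ℤ)).filter (fun x => x + 1 ≤ (a:ℤ)) =
        Finset.Icc (1:ℤ) ((a:ℤ) - 1) := by
      ext x; simp only [Finset.mem_filter, Finset.mem_Icc]; omega
    rw [this, Int.card_Icc]
    simp only [Nat.cast_id]
    omega
  omega

lemma rect_eCount (a b : ℕ) (ha : 1 ≤ a) (hb : 1 ≤ b) :
    eCount (rectFin a b) + (2*a + 2*b) ≤ 4*(a*b) := by
  have h1 : eCount (rectFin a b) ≤
      ∑ v ∈ rectFin a b,
        ((((if 2 ≤ v.1 then 1 else 0) + (if v.1 + 1 ≤ (a:ℤ) then 1 else 0)) : ℕ)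
          + ((if 2 ≤ v.2 then 1 else 0) + (if v.2 + 1 ≤ (b:ℤ) then 1 else 0))) :=
    Finset.sum_le_sum fun v _ => degF_rect_le a b
  have h2 : ∑ v ∈ rectFin a b,
        ((((if 2 ≤ v.1 then 1 else 0) + (if v.1 + 1 ≤ (a:ℤ) then 1 else 0)) : ℕ)
          + ((if 2 ≤ v.2 then 1 else 0) + (if v.2 + 1 ≤ (b:ℤ) then 1 else 0)))
      = b * ((a-1) + (a-1)) + a * ((b-1) + (b-1)) := by
    unfold rectFin
    have hc : (Finset.Icc (1:ℤ) (b:ℤ)).card = b := by rw [Int.card_Icc]; omega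
    have hc' : (Finset.Icc (1:ℤ) (a:ℤ)).card = a := by rw [Int.card_Icc]; omega
    rw [Finset.sum_product]
    have hrow : ∀ x : ℤ,
        (∑ y ∈ Finset.Icc (1:ℤ) (b:ℤ),
          ((((if 2 ≤ x then 1 else 0) + (if x + 1 ≤ (a:ℤ) then 1 else 0)) : ℕ)
            + ((if 2 ≤ y then 1 else 0) + (if y + 1 ≤ (b:ℤ) then 1 else 0))))
        = b * ((if 2 ≤ x then 1 else 0) + (if x + 1 ≤ (a:ℤ) then 1 else 0))
          + ((b-1) + (b-1)) := by
      intro x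
      rw [Finset.sum_add_distrib, Finset.sum_const, sum_indicator_Icc b hb, hc, smul_eq_mul]
    rw [Finset.sum_congr rfl fun x _ => hrow x]
    rw [Finset.sum_add_distrib, Finset.sum_const, ← Finset.mul_sum, sum_indicator_Icc a ha,
      hc', smul_eq_mul]
  have hab : a * b ≥ 1 := Nat.one_le_iff_ne_zero.mpr (by positivity)
  obtain ⟨a', rfl⟩ : ∃ a', a = a' + 1 := ⟨a - 1, by omega⟩
  obtain ⟨b', rfl⟩ : ∃ b', b = b' + 1 := ⟨b - 1, by omega⟩
  simp only [Nat.add_sub_cancel] at h2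
  have : (b' + 1) * (a' + a') + (a' + 1) * (b' + b') + (2*(a'+1) + 2*(b'+1))
      = 4*((a'+1)*(b'+1)) := by ring
  omega

/-- The perimeter lemma: an internally filled rectangle needs at least
`(a+b)/2` initially infected sites. -/
lemma perim_lemma (a b : ℕ) (ha : 1 ≤ a) (hb : 1 ≤ b) (A : Finset (ℤ × ℤ))
    (hA : A ⊆ rectFin a b) (h : bClosure (rectSet a b) ↑A = rectSet a b) :
    a + b ≤ 2 * A.card := by
  obtain ⟨T, hAT, hTR, hfix, hper⟩ :=
    exists_fixed (rectFin a b) (rectFin a b).card A hA (by omega)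
  have hclosed : (↑T : Set (ℤ × ℤ)) ∈ {B : Set (ℤ × ℤ) | ↑A ∩ rectSet a b ⊆ B ∧
      ∀ v ∈ rectSet a b, (∃ w₁ ∈ B, ∃ w₂ ∈ B, w₁ ≠ w₂ ∧ adjZ2 v w₁ ∧ adjZ2 v w₂) → v ∈ B} := by
    constructor
    · exact Set.inter_subset_left.trans (Finset.coe_subset.mpr hAT)
    · intro v hv hex
      have hvR : v ∈ rectFin a b := by
        rw [← coe_rectFin] at hv; exact hv
      by_contra hvT
      have hvT' : v ∉ T := fun hc => hvT (Finset.mem_coe.mpr hc)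
      have hex' : ∃ w₁ ∈ T, ∃ w₂ ∈ T, w₁ ≠ w₂ ∧ adjZ2 v w₁ ∧ adjZ2 v w₂ := by
        obtain ⟨w₁, hw₁, w₂, hw₂, hne, h₁, h₂⟩ := hex
        exact ⟨w₁, hw₁, w₂, hw₂, hne, h₁, h₂⟩
      have : v ∈ nextF (rectFin a b) T :=
        Finset.mem_filter.mpr ⟨hvR, hvT', hex'⟩
      have : v ∈ stepF (rectFin a b) T := Finset.mem_union_right _ this
      rw [hfix] at this
      exact hvT' this
  have hsub : bClosure (rectSet a b) ↑A ⊆ ↑T := Set.sInter_subset_of_mem hclosed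
  rw [h] at hsub
  have hRT : rectFin a b ⊆ T := by
    rw [← Finset.coe_subset, coe_rectFin]
    exact hsub
  have hTeq : T = rectFin a b := Finset.Subset.antisymm hTR hRT
  subst hTeq
  have hE := rect_eCount a b ha hb
  have hcard := card_rectFin a b
  omega

/-- the `k^k ≤ 3^k k!` bound -/
lemma pow_self_le_three_pow_mul_factorial (k : ℕ) :
    (k : ℝ) ^ k ≤ 3 ^ k * (Nat.factorial k : ℝ) := by
  induction k with
  | zero => simp
  | succ k ih =>
    rw [Nat.factorial_succ]
    push_cast
    have hstep : ((k:ℝ) + 1) ^ k ≤ 3 * (k:ℝ) ^ k := by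
      rcases Nat.eq_zero_or_pos k with rfl | hk
      · norm_num
      · have hk0 : (0:ℝ) < k := by exact_mod_cast hk
        have h1 : ((k:ℝ) + 1) = (k:ℝ) * (1 + 1/(k:ℝ)) := by field_simp
        have h2 : (1 + 1/(k:ℝ)) ≤ Real.exp (1/(k:ℝ)) := by
          have := Real.add_one_le_exp (1/(k:ℝ)); linarith
        have h3 : (1 + 1/(k:ℝ)) ^ k ≤ Real.exp (1/(k:ℝ)) ^ k := by
          apply pow_le_pow_left₀ (by positivity) h2
        have h4 : Real.exp (1/(k:ℝ)) ^ k = Real.exp 1 := by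
          rw [← Real.exp_nat_mul]
          congr 1
          field_simp
        have h5 : Real.exp 1 ≤ 3 := by
          have := Real.exp_one_lt_d9
          linarith
        calc ((k:ℝ) + 1) ^ k = (k:ℝ) ^ k * (1 + 1/(k:ℝ)) ^ k := by
              rw [h1, mul_pow]
          _ ≤ (k:ℝ) ^ k * 3 := by
              have : (1 + 1/(k:ℝ)) ^ k ≤ 3 := h3.trans (by rw [h4]; exact h5)
              have hknn : (0:ℝ) ≤ (k:ℝ) ^ k := by positivity
              nlinarith
          _ = 3 * (k:ℝ) ^ k := by ring
    have hkn : (0:ℝ) ≤ (k:ℝ) + 1 := by positivity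
    calc ((k:ℝ) + 1) ^ (k+1) = ((k:ℝ) + 1) * ((k:ℝ) + 1) ^ k := by ring
      _ ≤ ((k:ℝ) + 1) * (3 * (k:ℝ) ^ k) := by
          apply mul_le_mul_of_nonneg_left hstep hkn
      _ ≤ ((k:ℝ) + 1) * (3 * (3 ^ k * (Nat.factorial k : ℝ))) := by
          have : (0:ℝ) ≤ 3 := by norm_num
          have h3k : (3:ℝ) * (k:ℝ)^k ≤ 3 * (3 ^ k * (Nat.factorial k : ℝ)) := by nlinarith
          apply mul_le_mul_of_nonneg_left h3k hkn
      _ = 3 ^ (k+1) * (((k:ℝ) + 1) * (Nat.factorial k : ℝ)) := by ring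

open scoped Classical in
lemma probEvent_mono {ι : Type*} [DecidableEq ι] (V : Finset ι) (p : ℝ)
    (hp : 0 ≤ p) (hp1 : p ≤ 1) (E F : Finset ι → Prop)
    (h : ∀ A ∈ V.powerset, E A → F A) :
    probEvent V p E ≤ probEvent V p F := by
  unfold probEvent
  apply Finset.sum_le_sum
  intro A hA
  by_cases hE : E A
  · rw [if_pos hE, if_pos (h A hA hE)]
  · rw [if_neg hE]
    split
    · exact mul_nonneg (pow_nonneg hp _) (pow_nonneg (by linarith) _)
    · exact le_rfl

open scoped Classical in
lemma probEvent_card_ge {ι : Type*} [DecidableEq ι] (V : Finset ι) (p : ℝ) (k : ℕ)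
    (hp : 0 ≤ p) (hp1 : p ≤ 1) (hk : k ≤ V.card) :
    probEvent V p (fun A => k ≤ A.card) ≤ (V.card.choose k : ℝ) * p ^ k := by
  set n := V.card with hn
  have hsum : probEvent V p (fun A => k ≤ A.card)
      = ∑ m ∈ Finset.range (n + 1),
          (n.choose m : ℝ) * (if k ≤ m then p ^ m * (1 - p) ^ (n - m) else 0) := by
    have h0 : probEvent V p (fun A => k ≤ A.card)
        = ∑ A ∈ V.powerset,
            (fun m => if k ≤ m then p ^ m * (1 - p) ^ (n - m) else (0:ℝ)) A.card := by
      unfold probEvent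
      refine Finset.sum_congr rfl fun A _ => ?_
      by_cases hkA : k ≤ A.card <;> simp [hkA, hn]
    rw [h0]
    have := Finset.sum_powerset_apply_card
      (f := fun m => if k ≤ m then p ^ m * (1 - p) ^ (n - m) else (0:ℝ)) (x := V)
    simpa [nsmul_eq_mul, ← hn] using this
  rw [hsum]
  have hterm : ∀ m ∈ Finset.range (n + 1),
      (n.choose m : ℝ) * (if k ≤ m then p ^ m * (1 - p) ^ (n - m) else 0) ≤
      (n.choose k : ℝ) * p ^ k *
        (if k ≤ m then ((n - k).choose (m - k) : ℝ) * p ^ (m - k) * (1 - p) ^ ((n - k) - (m - k)) else 0) := by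
    intro m hm
    have hmn : m ≤ n := by
      have := Finset.mem_range.mp hm; omega
    by_cases hkm : k ≤ m
    · rw [if_pos hkm, if_pos hkm]
      have hchoose : (n.choose m : ℝ) ≤ (n.choose k : ℝ) * ((n - k).choose (m - k) : ℝ) := by
        have h1 : n.choose m ≤ n.choose k * (n - k).choose (m - k) := by
          have hid := Nat.choose_mul (n := n) (k := m) (s := k) hkm
          calc n.choose m ≤ n.choose m * m.choose k :=
                Nat.le_mul_of_pos_right _ (Nat.choose_pos hkm)
            _ = n.choose k * (n - k).choose (m - k) := hid
        exact_mod_cast h1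
      have hppow : p ^ m = p ^ k * p ^ (m - k) := by
        rw [← pow_add]; congr 1; omega
      have hqpow : (n : ℕ) - m = (n - k) - (m - k) := by omega
      rw [hppow, hqpow]
      have hnne : (0:ℝ) ≤ p ^ k * p ^ (m-k) * (1-p)^((n-k)-(m-k)) :=
        mul_nonneg (mul_nonneg (pow_nonneg hp _) (pow_nonneg hp _))
          (pow_nonneg (by linarith) _)
      calc (n.choose m : ℝ) * (p ^ k * p ^ (m - k) * (1 - p) ^ ((n-k) - (m-k)))
          ≤ ((n.choose k : ℝ) * ((n - k).choose (m - k) : ℝ)) * (p ^ k * p ^ (m - k) * (1 - p) ^ ((n-k) - (m-k))) := by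
            apply mul_le_mul_of_nonneg_right hchoose hnne
        _ = (n.choose k : ℝ) * p ^ k * (((n - k).choose (m - k) : ℝ) * p ^ (m - k) * (1 - p) ^ ((n - k) - (m - k))) := by
            ring
    · rw [if_neg hkm, if_neg hkm]
      simp
  calc (∑ m ∈ Finset.range (n + 1),
          (n.choose m : ℝ) * (if k ≤ m then p ^ m * (1 - p) ^ (n - m) else 0))
      ≤ ∑ m ∈ Finset.range (n + 1), (n.choose k : ℝ) * p ^ k *
          (if k ≤ m then ((n - k).choose (m - k) : ℝ) * p ^ (m - k) * (1 - p) ^ ((n - k) - (m - k)) else 0) :=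
        Finset.sum_le_sum hterm
    _ = (n.choose k : ℝ) * p ^ k * ∑ m ∈ Finset.range (n + 1),
          (if k ≤ m then ((n - k).choose (m - k) : ℝ) * p ^ (m - k) * (1 - p) ^ ((n - k) - (m - k)) else 0) := by
        rw [Finset.mul_sum]
    _ ≤ (n.choose k : ℝ) * p ^ k * 1 := by
        have hnn : (0:ℝ) ≤ (n.choose k : ℝ) * p ^ k := by positivity
        apply mul_le_mul_of_nonneg_left _ hnn
        have hswap : (∑ m ∈ Finset.range (n + 1),
            (if k ≤ m then ((n - k).choose (m - k) : ℝ) * p ^ (m - k) * (1 - p) ^ ((n - k) - (m - k)) else 0))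
            = ∑ m ∈ Finset.Icc k n,
              ((n - k).choose (m - k) : ℝ) * p ^ (m - k) * (1 - p) ^ ((n - k) - (m - k)) := by
          rw [← Finset.sum_filter]
          congr 1
          ext m
          simp only [Finset.mem_filter, Finset.mem_range, Finset.mem_Icc]
          omega
        rw [hswap]
        have hre : (∑ m ∈ Finset.Icc k n,
              ((n - k).choose (m - k) : ℝ) * p ^ (m - k) * (1 - p) ^ ((n - k) - (m - k)))
            = ∑ i ∈ Finset.range (n - k + 1),
              ((n - k).choose i : ℝ) * p ^ i * (1 - p) ^ ((n - k) - i) := by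
          have hIccIco : Finset.Icc k n = Finset.Ico k (n+1) := by
            ext m; simp [Finset.mem_Icc, Finset.mem_Ico]
          rw [hIccIco, Finset.sum_Ico_eq_sum_range]
          have : n + 1 - k = n - k + 1 := by omega
          rw [this]
          refine Finset.sum_congr rfl fun i _ => ?_
          have hki : k + i - k = i := by omega
          rw [hki]
        rw [hre]
        have hbin : (∑ i ∈ Finset.range (n - k + 1),
              ((n - k).choose i : ℝ) * p ^ i * (1 - p) ^ ((n - k) - i)) = 1 := by
          have h := add_pow p (1 - p) (n - k)
          simp only [add_sub_cancel, one_pow] at h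
          calc (∑ i ∈ Finset.range (n - k + 1),
                ((n - k).choose i : ℝ) * p ^ i * (1 - p) ^ ((n - k) - i))
              = ∑ i ∈ Finset.range (n - k + 1),
                p ^ i * (1 - p) ^ ((n - k) - i) * ((n - k).choose i : ℝ) :=
                Finset.sum_congr rfl fun i _ => by ring
            _ = 1 := by rw [← h]
        rw [hbin]
    _ = (n.choose k : ℝ) * p ^ k := by ring

end Aux

set_option maxHeartbeats 1000000 in
/-- Lemma 2 of Gravner–Holroyd–Morris: the probability that a small rectangle
with dimensions `(a,b)`, `a ≤ b`, `a·p ≤ δ`, is internally filled is at most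
`3^φ(R) · exp(−φ(R)·g(aq))`. -/
theorem prob_internally_filled_le :
    ∃ δ > (0:ℝ), ∀ (p : ℝ) (a b : ℕ), 0 < p → p < 1 → 1 ≤ a → a ≤ b →
      (a : ℝ) * p ≤ δ →
      probEvent (rectFin a b) p (fun A => bClosure (rectSet a b) ↑A = rectSet a b) ≤
        (3 : ℝ) ^ (a + b) *
          Real.exp (-((a + b : ℕ) : ℝ) * gFn ((a : ℝ) * (-Real.log (1 - p)))) := by
  refine ⟨1/100, by norm_num, ?_⟩
  intro p a b hp hp1 ha hab hδ
  have hb : 1 ≤ b := le_trans ha hab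
  set k : ℕ := (a + b + 1)/2 with hkdef
  have hk1 : 1 ≤ k := by omega
  have haR : (1:ℝ) ≤ (a:ℝ) := by exact_mod_cast ha
  have h1p : (0:ℝ) < 1 - p := by linarith
  set t : ℝ := (a:ℝ) * p with htdef
  have ht0 : 0 < t := by positivity
  have htδ : t ≤ 1/100 := hδ
  have hpδ : p ≤ 1/100 := by nlinarith
  set q : ℝ := -Real.log (1 - p) with hqdef
  set x : ℝ := (a:ℝ) * q with hxdef
  set u : ℝ := 1 - Real.exp (-x) with hudef
  set β : ℝ := betaFn u with hβdef
  -- basic bounds on q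
  have hple : p ≤ q := by
    have h1 : 1 - p ≤ Real.exp (-p) := by
      have := Real.add_one_le_exp (-p); linarith
    have h2 : Real.log (1 - p) ≤ -p := by
      calc Real.log (1 - p) ≤ Real.log (Real.exp (-p)) := Real.log_le_log h1p h1
        _ = -p := Real.log_exp _
    rw [hqdef]; linarith
  have hqle : q ≤ 2 * p := by
    have h1 : Real.log ((1-p)⁻¹) ≤ (1-p)⁻¹ - 1 :=
      Real.log_le_sub_one_of_pos (by positivity)
    rw [Real.log_inv] at h1
    have hinv : (1-p)⁻¹ * (1-p) = 1 := inv_mul_cancel₀ (ne_of_gt h1p)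
    have h2 : (1-p)⁻¹ ≤ 1 + 2*p := by nlinarith [inv_pos.mpr h1p]
    rw [hqdef]; linarith
  have hq0 : 0 < q := lt_of_lt_of_le hp hple
  have hpx : t ≤ x := by
    rw [hxdef, htdef]
    nlinarith
  have hxle : x ≤ 2 * t := by
    rw [hxdef, htdef]
    nlinarith
  have hx0 : 0 < x := lt_of_lt_of_le ht0 hpx
  -- bounds on u
  have hu0 : 0 < u := by
    rw [hudef]
    have : Real.exp (-x) < 1 := Real.exp_lt_one_iff.mpr (by linarith)
    linarith
  have huxb : u ≤ x := by
    rw [hudef]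
    have := Real.add_one_le_exp (-x); linarith
  have hu2t : u ≤ 2 * t := huxb.trans hxle
  have hu1 : u < 1 := by
    rw [hudef]
    have : 0 < Real.exp (-x) := Real.exp_pos _
    linarith
  have hut : t ≤ u * (1 + t) := by
    have hext : Real.exp (-x) ≤ Real.exp (-t) := Real.exp_le_exp.mpr (by linarith)
    have h1t : (0:ℝ) < 1 + t := by linarith
    have hexp : Real.exp (-t) ≤ (1 + t)⁻¹ := by
      rw [Real.exp_neg]
      have h2 : 1 + t ≤ Real.exp t := by have := Real.add_one_le_exp t; linarith
      exact inv_anti₀ h1t h2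
    have hinv : (1 + t) * (1 + t)⁻¹ = 1 := mul_inv_cancel₀ (ne_of_gt h1t)
    have hul : 1 - (1 + t)⁻¹ ≤ u := by rw [hudef]; linarith
    nlinarith
  -- beta bounds
  have hX0 : (0:ℝ) ≤ u * (4 - 3*u) := by nlinarith
  have hsq : Real.sqrt (u * (4 - 3*u)) ^ 2 = u * (4 - 3*u) := Real.sq_sqrt hX0
  have hsqnn : 0 ≤ Real.sqrt (u * (4 - 3*u)) := Real.sqrt_nonneg _
  have hβpos : 0 < β := by
    rw [hβdef]; unfold betaFn; linarith
  have hβsq : u * (4 - 3*u) / 4 ≤ β ^ 2 := by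
    rw [hβdef]; unfold betaFn
    nlinarith [hsq, hsqnn, hu0.le, sq_nonneg (u + Real.sqrt (u * (4 - 3*u)))]
  have hmain : 6 * t ≤ 9 * β ^ 2 := by
    have A2 : t * u ≤ (1/100) * u := mul_le_mul_of_nonneg_right htδ hu0.le
    have A3 : u * u ≤ 2 * t * u := mul_le_mul_of_nonneg_right hu2t hu0.le
    nlinarith
  have h6t1 : 6 * t ≤ 1 := by linarith
  have h6t0 : (0:ℝ) ≤ 6 * t := by linarith
  -- step 1 : the perimeter bound
  have h1 : probEvent (rectFin a b) p (fun A => bClosure (rectSet a b) ↑A = rectSet a b)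
      ≤ probEvent (rectFin a b) p (fun A => k ≤ A.card) := by
    apply probEvent_mono _ _ hp.le (by linarith)
    intro A hA hE
    have := perim_lemma a b ha hb A (Finset.mem_powerset.mp hA) hE
    omega
  have h2ab : a + b ≤ 2 * (a * b) := by nlinarith
  have hkcard : k ≤ (rectFin a b).card := by
    rw [card_rectFin]; omega
  have h2 : probEvent (rectFin a b) p (fun A => k ≤ A.card)
      ≤ (((rectFin a b).card.choose k : ℕ) : ℝ) * p ^ k :=
    probEvent_card_ge _ _ _ hp.le (by linarith) hkcard
  rw [card_rectFin] at h2
  -- choose bound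
  set n : ℕ := a * b with hndef
  have hch : ((n.choose k : ℕ) : ℝ) * (k:ℝ) ^ k ≤ 3 ^ k * (n:ℝ) ^ k := by
    have hdF : n.choose k * Nat.factorial k ≤ n ^ k := by
      have h1' : Nat.factorial k * n.choose k = n.descFactorial k :=
        (Nat.descFactorial_eq_factorial_mul_choose n k).symm
      calc n.choose k * Nat.factorial k = Nat.factorial k * n.choose k := Nat.mul_comm _ _
        _ = n.descFactorial k := h1'
        _ ≤ n ^ k := Nat.descFactorial_le_pow n k
    have hdFR : ((n.choose k : ℕ) : ℝ) * ((Nat.factorial k : ℕ) : ℝ) ≤ (n:ℝ) ^ k := by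
      exact_mod_cast hdF
    have hkk := pow_self_le_three_pow_mul_factorial k
    have hcnn : (0:ℝ) ≤ ((n.choose k : ℕ) : ℝ) := Nat.cast_nonneg _
    calc ((n.choose k : ℕ) : ℝ) * (k:ℝ) ^ k
        ≤ ((n.choose k : ℕ) : ℝ) * (3 ^ k * (Nat.factorial k : ℝ)) :=
          mul_le_mul_of_nonneg_left hkk hcnn
      _ = 3 ^ k * (((n.choose k : ℕ) : ℝ) * (Nat.factorial k : ℝ)) := by ring
      _ ≤ 3 ^ k * (n:ℝ) ^ k := by
          have h3 : (0:ℝ) ≤ 3 ^ k := by positivity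
          exact mul_le_mul_of_nonneg_left hdFR h3
  -- the final numeric inequality
  have hb2k : (b:ℝ) ≤ 2 * (k:ℝ) := by
    have : b ≤ 2 * k := by omega
    exact_mod_cast this
  have hnp : 3 * (n:ℝ) * p ≤ 6 * t * (k:ℝ) := by
    rw [hndef, htdef]
    push_cast
    nlinarith [mul_le_mul_of_nonneg_left hb2k (by positivity : (0:ℝ) ≤ 3 * (a:ℝ) * p)]
  have h6β : (6*t) ^ k ≤ (3*β) ^ (a+b) := by
    have hsab : a + b ≤ k * 2 := by omega
    have hsq2 : ((6*t) ^ k) ^ 2 ≤ ((3*β) ^ (a+b)) ^ 2 := by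
      calc ((6*t) ^ k) ^ 2 = (6*t) ^ (k * 2) := (pow_mul _ _ _).symm
        _ ≤ (6*t) ^ (a+b) := pow_le_pow_of_le_one h6t0 h6t1 hsab
        _ ≤ (9 * β^2) ^ (a+b) := pow_le_pow_left₀ h6t0 hmain _
        _ = ((3*β) ^ 2) ^ (a+b) := by ring_nf
        _ = ((3*β) ^ (a+b)) ^ 2 := by rw [← pow_mul, ← pow_mul, Nat.mul_comm]
    have h3β : (0:ℝ) ≤ (3*β) ^ (a+b) := by positivity
    have h6tk : (0:ℝ) ≤ (6*t) ^ k := by positivity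
    exact (pow_le_pow_iff_left₀ h6tk h3β (by norm_num)).mp hsq2
  have hfinal : ((n.choose k : ℕ) : ℝ) * p ^ k ≤ (3*β) ^ (a+b) := by
    have hkkpos : (0:ℝ) < (k:ℝ) ^ k := by positivity
    rw [← mul_le_mul_iff_of_pos_right hkkpos]
    calc ((n.choose k : ℕ) : ℝ) * p ^ k * (k:ℝ) ^ k
        = (((n.choose k : ℕ) : ℝ) * (k:ℝ) ^ k) * p ^ k := by ring
      _ ≤ (3 ^ k * (n:ℝ) ^ k) * p ^ k := mul_le_mul_of_nonneg_right hch (by positivity)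
      _ = (3 * (n:ℝ) * p) ^ k := by rw [mul_pow, mul_pow]
      _ ≤ (6 * t * (k:ℝ)) ^ k := pow_le_pow_left₀ (by positivity) hnp k
      _ = (6*t) ^ k * (k:ℝ) ^ k := mul_pow _ _ _
      _ ≤ (3*β) ^ (a+b) * (k:ℝ) ^ k := mul_le_mul_of_nonneg_right h6β (by positivity)
  -- identify the RHS
  have hRHS : (3:ℝ) ^ (a+b) * Real.exp (-((a + b : ℕ) : ℝ) * gFn x) = (3*β) ^ (a+b) := by
    have hg : gFn x = - Real.log β := by
      rw [hβdef, hudef]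
      unfold gFn
      rfl
    rw [hg]
    have he : -((a + b : ℕ) : ℝ) * -Real.log β = ((a+b : ℕ) : ℝ) * Real.log β := by ring
    rw [he, Real.exp_nat_mul, Real.exp_log hβpos, mul_pow]
  calc probEvent (rectFin a b) p (fun A => bClosure (rectSet a b) ↑A = rectSet a b)
      ≤ probEvent (rectFin a b) p (fun A => k ≤ A.card) := h1
    _ ≤ ((n.choose k : ℕ) : ℝ) * p ^ k := h2
    _ ≤ (3*β) ^ (a+b) := hfinal
    _ = (3:ℝ) ^ (a+b) * Real.exp (-((a + b : ℕ) : ℝ) * gFn x) := hRHS.symm
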